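/- arXiv:1411.6917 — 2 statements merged into one kernel-verified Lean document; each statement's English description precedes it below -/
import Mathlib

section
/- As an identity of formal power series in a and q: ∑_{m,k≥0} (-a)^m q^{(m-k)^2+k^2+k} / (aq^2;q^2)_m · qbinom(m, 2k) = ∑_{n≥0} (-a)^n q^{n^2}, where qbinom(m, 2k) = [m choose 2k]_q is zero when 2k > m. -/
set_option maxRecDepth 4000


open PowerSeries Finset

/-- The q-Pochhammer symbol `(a; q)_n = ∏_{j=0}^{n-1} (1 - a q^j)` in `ℤ[[q]]`. -/
noncomputable def qPoch (a : PowerSeries ℤ) (n : ℕ) : PowerSeries ℤ :=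
  ∏ j ∈ Finset.range n, (1 - a * PowerSeries.X ^ j)

/-- The Gaussian binomial coefficient `[m choose r]_q = (q;q)_m / ((q;q)_r (q;q)_{m-r})`
as an element of `ℤ[[q]]` (zero when `r > m`). -/
noncomputable def gaussBinom (m r : ℕ) : PowerSeries ℤ :=
  if r ≤ m then
    qPoch PowerSeries.X m *
      Ring.inverse (qPoch PowerSeries.X r * qPoch PowerSeries.X (m - r))
  else 0

/-- We work in `ℤ[[q]][[a]]`, with `a` the outer variable and `q` the inner one. -/
noncomputable abbrev Aq : Type := PowerSeries (PowerSeries ℤ)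

/-- `(a q^2; q^2)_m = ∏_{j=0}^{m-1} (1 - a q^{2j+2})` as an element of `ℤ[[q]][[a]]`. -/
noncomputable def pochA (m : ℕ) : Aq :=
  ∏ j ∈ Finset.range m,
    (1 - PowerSeries.X * PowerSeries.C (R := PowerSeries ℤ) (PowerSeries.X ^ (2 * j + 2)))

section AndrewsAux


variable {A : Type*} [CommRing A]

def andrewsQB (v : A) : ℕ → ℕ → A
  | _, 0 => 1
  | 0, _+1 => 0
  | n+1, k+1 => andrewsQB v n k + v ^ (k+1) * andrewsQB v n (k+1)

namespace andrewsQB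

@[simp] lemma zero_right (v : A) (n : ℕ) : andrewsQB v n 0 = 1 := by
  cases n <;> rfl

lemma succ_succ (v : A) (n k : ℕ) :
    andrewsQB v (n+1) (k+1) = andrewsQB v n k + v ^ (k+1) * andrewsQB v n (k+1) := rfl

lemma eq_zero_of_lt (v : A) : ∀ {n k : ℕ}, n < k → andrewsQB v n k = 0
  | 0, _+1, _ => rfl
  | n+1, k+1, h => by
    rw [succ_succ, eq_zero_of_lt v (show n < k by omega),
      eq_zero_of_lt v (show n < k+1 by omega)]
    ring

@[simp] lemma self (v : A) : ∀ n : ℕ, andrewsQB v n n = 1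
  | 0 => rfl
  | n+1 => by
    rw [succ_succ, self v n, eq_zero_of_lt v (show n < n+1 by omega)]
    ring

lemma one_right (v : A) : ∀ n : ℕ, andrewsQB v n 1 = ∑ i ∈ range n, v ^ i
  | 0 => by rw [eq_zero_of_lt v Nat.zero_lt_one]; simp
  | n+1 => by
    rw [succ_succ, one_right v n, zero_right]
    have h := geom_sum_succ (x := v) (n := n)
    linear_combination -h

/-- Second Pascal rule. -/
lemma pascal₂ (v : A) : ∀ d k : ℕ,
    andrewsQB v (k+d+1) (k+1) = v ^ d * andrewsQB v (k+d) k + andrewsQB v (k+d) (k+1)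
  | 0, k => by
    rw [show k+0+1 = k+1 by omega, show k+0 = k by omega, self v (k+1),
      eq_zero_of_lt v (show k < k+1 by omega), self v k]
    ring
  | d+1, 0 => by
    rw [show 0+(d+1)+1 = (d+1)+1 by omega, show 0+(d+1) = d+1 by omega,
      one_right v (d+1+1), one_right v (d+1), zero_right]
    have h := geom_sum_succ' (x := v) (n := d+1)
    linear_combination h
  | d+1, k+1 => by
    rw [show (k+1)+(d+1)+1 = (k+d+2)+1 by omega, show (k+1)+(d+1) = (k+d+2) by omega]
    have e1 := succ_succ v (k+d+2) (k+1)
    have e2 := succ_succ v (k+d+1) k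
    have e3 := succ_succ v (k+d+1) (k+1)
    have h1 := pascal₂ v (d+1) k
    have h2 := pascal₂ v d (k+1)
    rw [show k+(d+1)+1 = (k+d+1)+1 by omega, show k+(d+1) = k+d+1 by omega] at h1
    rw [show (k+1)+d+1 = (k+d+1)+1 by omega, show (k+1)+d = k+d+1 by omega] at h2
    rw [show (k+d+2) = (k+d+1)+1 by omega] at e1 ⊢
    rw [show (k+d+1)+1+1 = k+d+1+1+1 by omega] at e1
    linear_combination e1 + h1 - v^(d+1)*e2 + v^(k+1+1)*h2 - e3

/-- Symmetry `[k+d; d] = [k+d; k]`. -/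
lemma symm_add (v : A) : ∀ k d : ℕ, andrewsQB v (k+d) d = andrewsQB v (k+d) k
  | 0, d => by rw [show 0+d = d by omega, self v d, zero_right]
  | k+1, 0 => by rw [show (k+1)+0 = k+1 by omega, self v (k+1), zero_right]
  | k+1, d+1 => by
    have ih1 := symm_add v (k+1) d
    have ih2 := symm_add v k (d+1)
    have hp := pascal₂ v (d+1) k
    rw [show (k+1)+(d+1) = (k+d+1)+1 by omega, succ_succ]
    rw [show k+(d+1) = k+d+1 by omega] at ih2
    rw [show (k+1)+d = k+d+1 by omega] at ih1
    rw [show k+(d+1)+1 = (k+d+1)+1 by omega, show k+(d+1) = k+d+1 by omega] at hp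
    rw [ih1, ih2, hp]
    ring
  termination_by k d => k + d

/-- Absorption. -/
lemma absorb (v : A) : ∀ d k : ℕ,
    (1 - v ^ (k+1)) * andrewsQB v (k+1+d) (k+1)
      = (1 - v ^ (d+1)) * andrewsQB v (k+1+d) k
  | 0, k => by
    have hs := symm_add v 1 k
    rw [show 1+k = k+1 by omega] at hs
    rw [show k+1+0 = k+1 by omega, self v (k+1), hs, one_right]
    linear_combination mul_geom_sum v (k+1)
  | d+1, 0 => by
    rw [show 0+1+(d+1) = (d+1)+1 by omega, zero_right, one_right]
    linear_combination - mul_geom_sum v (d+1+1)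
  | d+1, k+1 => by
    have ihA := absorb v d (k+1)
    have ihB := absorb v (d+1) k
    have e1 := succ_succ v (k+d+2) (k+1)
    have e2 := succ_succ v (k+d+2) k
    rw [show (k+1)+1+d = k+d+2 by omega] at ihA
    rw [show k+1+(d+1) = k+d+2 by omega] at ihB
    rw [show (k+1)+1+(d+1) = (k+d+2)+1 by omega]
    linear_combination (1-v^(k+1+1))*e1 - (1-v^(d+1+1))*e2 + v^(k+1+1)*ihA + ihB
  termination_by d k => (d, k)

end andrewsQB

/-- `(v; v)_m`-style product `∏_{j<m} (1 - v^(j+1))`. -/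
def andrewsPoch (v : A) (m : ℕ) : A := ∏ j ∈ range m, (1 - v ^ (j+1))

namespace andrewsPoch

@[simp] lemma zero (v : A) : andrewsPoch v 0 = 1 := by simp [andrewsPoch]

lemma succ (v : A) (m : ℕ) :
    andrewsPoch v (m+1) = andrewsPoch v m * (1 - v ^ (m+1)) := by
  rw [andrewsPoch, prod_range_succ]; rfl

end andrewsPoch

namespace andrewsQB

/-- Product formula: `[k+d; k] (v;v)_k (v;v)_d = (v;v)_{k+d}`. -/
lemma mul_poch (v : A) : ∀ k d : ℕ,
    andrewsQB v (k+d) k * andrewsPoch v k * andrewsPoch v d = andrewsPoch v (k+d)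
  | 0, d => by simp
  | k+1, d => by
    have ih := mul_poch v k (d+1)
    have ha := absorb v d k
    have hp1 := andrewsPoch.succ v k
    have hp2 := andrewsPoch.succ v d
    rw [show k+(d+1) = (k+1)+d by omega] at ih
    linear_combination (andrewsQB v (k+1+d) (k+1) * andrewsPoch v d) * hp1
      + (andrewsPoch v k * andrewsPoch v d) * ha
      - (andrewsQB v (k+1+d) k * andrewsPoch v k) * hp2 + ih

lemma choose_succ_two (r : ℕ) : (r+1).choose 2 = r.choose 2 + r := by
  rw [show (2:ℕ) = 1+1 from rfl, Nat.choose_succ_succ, Nat.choose_one_right, Nat.add_comm]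

/-- Homogeneous finite q-binomial theorem. -/
lemma qbinom_theorem (v : A) : ∀ (m : ℕ) (x y : A),
    ∏ i ∈ range m, (y + x * v ^ i)
      = ∑ r ∈ range (m+1), v ^ (r.choose 2) * andrewsQB v m r * x ^ r * y ^ (m-r)
  | 0, x, y => by simp
  | m+1, x, y => by
    have ih := qbinom_theorem v m (x * v) y
    rw [prod_range_succ']
    have hconv : ∀ i, y + x * v * v ^ i = y + x * v ^ (i+1) := by
      intro i; ring
    rw [show (∏ i ∈ range m, (y + x * v ^ (i+1)))
        = ∏ i ∈ range m, (y + x * v * v ^ i) from prod_congr rfl fun i _ => (hconv i).symm,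
      ih, pow_zero, mul_one]
    -- LHS now: (∑_{r<m+1} v^(C r 2) qb m r (x v)^r y^(m-r)) * (y + x)
    -- Step 1: rewrite (x*v)^r = x^r * v^r and distribute
    rw [show (∑ r ∈ range (m+1), v ^ (r.choose 2) * andrewsQB v m r * (x*v) ^ r * y ^ (m-r))
        = ∑ r ∈ range (m+1), v ^ (r.choose 2 + r) * andrewsQB v m r * x ^ r * y ^ (m-r) from
      sum_congr rfl fun r _ => by rw [mul_pow, pow_add]; ring]
    rw [mul_add]
    -- RHS: peel bottom term r = 0
    rw [sum_range_succ' (fun r => v ^ (r.choose 2) * andrewsQB v (m+1) r * x ^ r * y ^ (m+1-r)) (m+1)]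
    simp only [Nat.choose_zero_succ, Nat.choose_zero_right, pow_zero, one_mul, zero_right,
      mul_one, Nat.sub_zero]
    -- expand qb (m+1) (r+1) by Pascal
    rw [show (∑ r ∈ range (m+1), v ^ ((r+1).choose 2) * andrewsQB v (m+1) (r+1) * x ^ (r+1) * y ^ (m+1-(r+1)))
        = (∑ r ∈ range (m+1), v ^ (r.choose 2 + r) * andrewsQB v m r * x ^ r * y ^ (m-r) * x)
          + ∑ r ∈ range (m+1), v ^ ((r+1).choose 2 + (r+1)) * andrewsQB v m (r+1) * x ^ (r+1) * y ^ (m-r) from by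
      rw [← sum_add_distrib]
      refine sum_congr rfl fun r hr => ?_
      rw [succ_succ, choose_succ_two, show m+1-(r+1) = m-r by omega, pow_add, pow_add, pow_add]
      ring]
    -- remaining: (∑ ...) * y = y^(m+1) + ∑_{r<m+1} v^(C(r+1) 2 + (r+1)) qb m (r+1) x^(r+1) y^(m-r)
    rw [sum_range_succ (fun r => v ^ ((r+1).choose 2 + (r+1)) * andrewsQB v m (r+1) * x ^ (r+1) * y ^ (m-r)) m,
      eq_zero_of_lt v (show m < m+1 by omega)]
    rw [sum_range_succ' (fun r => v ^ (r.choose 2 + r) * andrewsQB v m r * x ^ r * y ^ (m-r)) m]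
    simp only [Nat.choose_zero_right, pow_zero, zero_right, mul_one, one_mul, Nat.sub_zero,
      mul_zero, zero_mul, add_zero]
    rw [add_mul, add_mul, sum_mul]
    rw [sum_range_succ' (fun r => v ^ (r.choose 2 + r) * andrewsQB v m r * x ^ r * y ^ (m-r) * x) m]
    have hy : (∑ i ∈ range m, v ^ ((i+1).choose 2 + (i+1)) * andrewsQB v m (i+1) * x^(i+1) * y^(m-(i+1)) * y)
        = ∑ i ∈ range m, v ^ ((i+1).choose 2 + (i+1)) * andrewsQB v m (i+1) * x^(i+1) * y^(m-i) := by
      refine sum_congr rfl fun i hi => ?_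
      have him : i < m := mem_range.mp hi
      rw [show m - i = (m-(i+1))+1 by omega, pow_succ]
      ring
    rw [hy]
    norm_num
    rw [sum_mul]
    ring

end andrewsQB

namespace andrewsQB

lemma even_sum (w : ℕ → A) : ∀ N : ℕ,
    ∑ r ∈ range (2*N), (1 + (-1:A)^r) * w r = 2 * ∑ k ∈ range N, w (2*k)
  | 0 => by simp
  | N+1 => by
    rw [show 2*(N+1) = (2*N+1)+1 by omega, sum_range_succ, sum_range_succ,
      even_sum w N, sum_range_succ]
    have h1 : (-1:A)^(2*N) = 1 := Even.neg_one_pow ⟨N, by ring⟩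
    have h2 : (-1:A)^(2*N+1) = -1 := Odd.neg_one_pow ⟨N, by ring⟩
    rw [h1, h2]
    ring

lemma sum_range_add_one : ∀ s : ℕ, ∑ i ∈ range s, (i+1) = (s+1).choose 2
  | 0 => by simp
  | s+1 => by
    rw [sum_range_succ, sum_range_add_one s, choose_succ_two (s+1)]

lemma choose_two_mul : ∀ k : ℕ, (2*k).choose 2 + k = 2*k*k
  | 0 => by simp
  | k+1 => by
    have ih := choose_two_mul k
    have h1 : (2*(k+1)).choose 2 = (2*k+1).choose 2 + (2*k+1) := by
      rw [show 2*(k+1) = (2*k+1)+1 by omega, choose_succ_two]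
    have h2 : (2*k+1).choose 2 = (2*k).choose 2 + 2*k := by
      rw [show 2*k+1 = (2*k)+1 by omega, choose_succ_two]
    have h3 : 2*(k+1)*(k+1) = 2*k*k + (4*k+2) := by ring
    omega

lemma expo_even (k m : ℕ) (h : 2*k ≤ m) :
    (2*k).choose 2 + (2*k) + m*(m-2*k) = (m-k)^2 + k^2 + k := by
  have h1 := choose_two_mul k
  zify [h, show k ≤ m by omega] at *
  linear_combination h1

end andrewsQB

/-- `(-v; v)_s`-style product `∏_{i<s} (1 + v^(i+1))`. -/
def andrewsNP (v : A) (s : ℕ) : A := ∏ i ∈ range s, (1 + v ^ (i+1))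

namespace andrewsNP

@[simp] lemma zero (v : A) : andrewsNP v 0 = 1 := by simp [andrewsNP]

lemma succ (v : A) (s : ℕ) :
    andrewsNP v (s+1) = andrewsNP v s * (1 + v ^ (s+1)) := by
  rw [andrewsNP, prod_range_succ]; rfl

end andrewsNP

/-- The telescoping summand `F(n,j) = (-1)^j v^(C(j,2)) (-v;v)_j [n;j]_{v^2}`. -/
def andrewsF (v : A) (n j : ℕ) : A :=
  (-1:A)^j * v ^ (j.choose 2) * andrewsNP v j * andrewsQB (v^2) n j

namespace andrewsF

@[simp] lemma zero_right (v : A) (n : ℕ) : andrewsF v n 0 = 1 := by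
  simp [andrewsF]

/-- The local certificate identity (L'). -/
lemma Lstep (v : A) (d j : ℕ) :
    (1 + v^(j+1)) * andrewsQB (v^2) (j+d+1) (j+1)
      = v^(j+1) * (1 + v^(j+1)) * andrewsQB (v^2) (j+d) (j+1)
        + (1 + v^(2*d+j+1)) * andrewsQB (v^2) (j+d) j := by
  match d with
  | 0 =>
    rw [show j+0+1 = j+1 by omega, show j+0 = j by omega, andrewsQB.self,
      andrewsQB.eq_zero_of_lt (v^2) (show j < j+1 by omega), andrewsQB.self]
    ring
  | d'+1 =>
    have ha := andrewsQB.absorb (v^2) d' j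
    have hp := andrewsQB.pascal₂ (v^2) (d'+1) j
    rw [show j+1+d' = j+(d'+1) by omega] at ha
    rw [show j+(d'+1)+1 = (j+(d'+1))+1 by omega] at hp
    linear_combination (1 + v^(j+1)) * hp + ha

/-- The telescoped certificate identity (C). -/
lemma Cstep (v : A) : ∀ j d : ℕ,
    ∑ i ∈ range (j+1),
        (andrewsF v (j+d+1) i + v^(2*(j+d)+1) * andrewsF v (j+d) i)
      = (v^j + v^(2*(j+d)+1)) * andrewsF v (j+d) j
  | 0, d => by
    simp
  | j+1, d => by
    have ih := Cstep v j (d+1)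
    have hl := Lstep v (d+1) j
    rw [show j+(d+1) = (j+1)+d by omega] at ih
    rw [show j+(d+1)+1 = (j+1)+d+1 by omega, show j+(d+1) = (j+1)+d by omega] at hl
    rw [sum_range_succ]
    rw [show (j+1)+d+1 = ((j+1)+d)+1 by omega] at hl ⊢
    simp only [andrewsF, andrewsNP.succ, andrewsQB.choose_succ_two]
    simp only [andrewsF, andrewsNP.succ, andrewsQB.choose_succ_two] at ih
    linear_combination ih
      + ((-1:A)^(j+1) * v^(j.choose 2 + j) * andrewsNP v j) * hl

end andrewsF

/-- `G(n) = ∑_j F(n,j)`. -/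
def andrewsG (v : A) (n : ℕ) : A := ∑ j ∈ range (n+1), andrewsF v n j

lemma andrewsG_succ (v : A) (n : ℕ) :
    andrewsG v (n+1) = -(v^(2*n+1)) * andrewsG v n := by
  have hc := andrewsF.Cstep v n 0
  rw [show n+0 = n by omega] at hc
  simp only [sum_add_distrib, ← mul_sum] at hc
  rw [andrewsG, andrewsG, sum_range_succ]
  simp only [andrewsF, andrewsNP.succ, andrewsQB.choose_succ_two, andrewsQB.self]
  simp only [andrewsF, andrewsQB.self] at hc
  linear_combination hc

/-- The key single-sum identity (★): `G(n) = (-1)^n v^(n^2)`. -/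
lemma andrewsG_eq (v : A) : ∀ n : ℕ, andrewsG v n = (-1:A)^n * v^(n^2)
  | 0 => by simp [andrewsG, andrewsF]
  | n+1 => by
    rw [andrewsG_succ, andrewsG_eq v n, show (n+1)^2 = n^2 + (2*n+1) by ring,
      pow_add]
    ring

end AndrewsAux

section AndrewsPS

open PowerSeries

local notation "RZ" => PowerSeries ℤ

lemma andrews_qPoch_eq (n : ℕ) :
    qPoch PowerSeries.X n = andrewsPoch (PowerSeries.X : RZ) n := by
  unfold qPoch andrewsPoch
  exact prod_congr rfl fun j _ => by rw [← pow_succ']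

lemma andrews_isUnit_poch (n : ℕ) : IsUnit (andrewsPoch (PowerSeries.X : RZ) n) := by
  rw [PowerSeries.isUnit_iff_constantCoeff]
  rw [andrewsPoch, map_prod]
  have : ∀ j ∈ range n, (constantCoeff (R := ℤ)) (1 - (PowerSeries.X : RZ) ^ (j+1)) = 1 := by
    intro j _
    simp [zero_pow]
  rw [prod_congr rfl this, prod_const_one]
  exact isUnit_one

lemma andrews_gaussBinom_eq (m r : ℕ) (h : r ≤ m) :
    gaussBinom m r = andrewsQB (PowerSeries.X : RZ) m r := by
  obtain ⟨d, rfl⟩ : ∃ d, m = r + d := ⟨m - r, by omega⟩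
  rw [gaussBinom, if_pos h, andrews_qPoch_eq, andrews_qPoch_eq, andrews_qPoch_eq,
    show r + d - r = d by omega]
  have hu : IsUnit (andrewsPoch (PowerSeries.X : RZ) r * andrewsPoch (PowerSeries.X : RZ) d) :=
    (andrews_isUnit_poch r).mul (andrews_isUnit_poch d)
  rw [← andrewsQB.mul_poch (PowerSeries.X : RZ) r d]
  have hone := Ring.mul_inverse_cancel _ hu
  linear_combination (andrewsQB (PowerSeries.X : RZ) (r + d) r) * hone

lemma andrews_ringInverse_eq {M : Type*} [CommMonoidWithZero M] {a b : M} (h : a * b = 1) :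
    Ring.inverse a = b := by
  have hu : IsUnit a := IsUnit.of_mul_eq_one b h
  calc Ring.inverse a = Ring.inverse a * (a * b) := by rw [h, mul_one]
  _ = b := Ring.inverse_mul_cancel_left a b hu

/-- Coefficientwise inverse of `pochA (m+1)`. -/
noncomputable def andrewsHS (m : ℕ) : Aq :=
  PowerSeries.mk fun t =>
    (PowerSeries.X : RZ) ^ (2*t) * andrewsQB ((PowerSeries.X : RZ)^2) (m+t) t

lemma andrews_pochA_zero : pochA 0 = 1 := by simp [pochA]

lemma andrews_pochA_succ (m : ℕ) :
    pochA (m+1) = pochA m *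
      (1 - PowerSeries.X * PowerSeries.C (R := RZ) (PowerSeries.X ^ (2*m+2))) := by
  rw [pochA, prod_range_succ]
  rfl

lemma andrews_keystep (m : ℕ) :
    (1 - PowerSeries.X * PowerSeries.C (R := RZ) (PowerSeries.X ^ (2*(m+1)+2))) * andrewsHS (m+1)
      = andrewsHS m := by
  ext t
  have hexpand : ∀ (u : RZ) (S : Aq) (t : ℕ),
      PowerSeries.coeff (R := RZ) t ((1 - PowerSeries.X * PowerSeries.C (R := RZ) u) * S)
        = PowerSeries.coeff (R := RZ) t S
          - PowerSeries.coeff (R := RZ) t (PowerSeries.X * (PowerSeries.C (R := RZ) u * S)) := by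
    intro u S t
    rw [sub_mul, one_mul, map_sub, mul_assoc]
  rw [hexpand]
  cases t with
  | zero =>
    rw [PowerSeries.coeff_zero_X_mul]
    simp [andrewsHS, PowerSeries.coeff_mk]
  | succ t =>
    rw [PowerSeries.coeff_succ_X_mul, PowerSeries.coeff_C_mul]
    simp only [andrewsHS, PowerSeries.coeff_mk]
    have hp := andrewsQB.pascal₂ ((PowerSeries.X : RZ)^2) (m+1) t
    rw [show t+(m+1)+1 = m+1+(t+1) by omega, show t+(m+1) = m+1+t by omega] at hp
    rw [hp, show m+(t+1) = m+1+t by omega]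
    ring_nf

lemma andrews_pochA_mul_hS : ∀ m : ℕ, pochA (m+1) * andrewsHS m = 1
  | 0 => by
    rw [andrews_pochA_succ, andrews_pochA_zero, one_mul]
    ext t
    have hexpand : ∀ (u : RZ) (S : Aq) (t : ℕ),
        PowerSeries.coeff (R := RZ) t ((1 - PowerSeries.X * PowerSeries.C (R := RZ) u) * S)
          = PowerSeries.coeff (R := RZ) t S
            - PowerSeries.coeff (R := RZ) t (PowerSeries.X * (PowerSeries.C (R := RZ) u * S)) := by
      intro u S t
      rw [sub_mul, one_mul, map_sub, mul_assoc]
    rw [hexpand]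
    cases t with
    | zero =>
      rw [PowerSeries.coeff_zero_X_mul]
      simp [andrewsHS, PowerSeries.coeff_mk]
    | succ t =>
      rw [PowerSeries.coeff_succ_X_mul, PowerSeries.coeff_C_mul]
      simp only [andrewsHS, PowerSeries.coeff_mk, show ∀ t:ℕ, (0:ℕ)+t = t from fun t => by omega,
        andrewsQB.self]
      rw [PowerSeries.coeff_one]
      simp only [Nat.succ_ne_zero, if_false]
      ring_nf
  | m+1 => by
    rw [andrews_pochA_succ (m+1),
      mul_assoc, andrews_keystep m, andrews_pochA_mul_hS m]

lemma andrews_ringInverse_pochA (m : ℕ) :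
    Ring.inverse (pochA (m+1)) = andrewsHS m :=
  andrews_ringInverse_eq (andrews_pochA_mul_hS m)

lemma andrews_coeff_term (g : RZ) (S : Aq) (m d : ℕ) :
    (PowerSeries.coeff (R := RZ) (d+m)) ((-(PowerSeries.X : Aq))^m * PowerSeries.C (R := RZ) g * S)
      = (-1:RZ)^m * (g * PowerSeries.coeff (R := RZ) d S) := by
  have h : (-(PowerSeries.X : Aq))^m * PowerSeries.C (R := RZ) g * S
      = PowerSeries.C (R := RZ) ((-1:RZ)^m * g) * (PowerSeries.X^m * S) := by
    rw [map_mul, map_pow, map_neg, map_one, neg_pow]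
    ring
  rw [h, PowerSeries.coeff_C_mul, PowerSeries.coeff_X_pow_mul]
  ring

lemma andrews_rhs_eval (e : ℕ) :
    PowerSeries.coeff (R := RZ) e
        (∑ n ∈ range (e+1), (-(PowerSeries.X : Aq))^n * PowerSeries.C (R := RZ) (PowerSeries.X^(n^2)))
      = (-1:RZ)^e * (PowerSeries.X : RZ)^(e^2) := by
  rw [map_sum]
  have h1 : ∀ n ∈ range (e+1),
      PowerSeries.coeff (R := RZ) e ((-(PowerSeries.X : Aq))^n * PowerSeries.C (R := RZ) (PowerSeries.X^(n^2)))
        = if e = n then (-1:RZ)^n * (PowerSeries.X : RZ)^(n^2) else 0 := by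
    intro n _
    have h : ∀ g : RZ, (-(PowerSeries.X : Aq))^n * PowerSeries.C (R := RZ) g
        = PowerSeries.C (R := RZ) ((-1:RZ)^n * g) * PowerSeries.X^n := by
      intro g
      rw [map_mul, map_pow, map_neg, map_one, neg_pow]
      ring
    rw [h, PowerSeries.coeff_C_mul_X_pow]
  rw [sum_congr rfl h1, sum_ite_eq (range (e+1)) e]
  simp [mem_range]

lemma andrews_two_ne_zero : (2 : PowerSeries ℤ) ≠ 0 := by
  intro hh
  have h2 := congrArg (PowerSeries.constantCoeff (R := ℤ)) hh
  rw [map_ofNat, map_zero] at h2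
  norm_num at h2

/-- Closed form of the inner `k`-sum:
`∑_k q^((m-k)^2+k^2+k) [m; 2k]_q = q^((m+1) choose 2) (-q;q)_{m-1}` for `m = j+1 ≥ 1`. -/
lemma andrews_fsum (j e : ℕ) (h : j+1 ≤ e) :
    (∑ k ∈ range (e+1), if 2*k ≤ j+1 then
        (PowerSeries.X : RZ)^((j+1-k)^2+k^2+k) * gaussBinom (j+1) (2*k) else 0)
      = (PowerSeries.X : RZ)^((j+2).choose 2) * andrewsNP (PowerSeries.X : RZ) j := by
  apply mul_left_cancel₀ andrews_two_ne_zero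
  have hu : ∀ k ∈ range (e+1),
      (if 2*k ≤ j+1 then (PowerSeries.X : RZ)^((j+1-k)^2+k^2+k) * gaussBinom (j+1) (2*k) else 0)
        = (PowerSeries.X : RZ)^((2*k).choose 2 + 2*k + (j+1)*((j+1)-2*k))
            * andrewsQB (PowerSeries.X : RZ) (j+1) (2*k) := by
    intro k _
    rcases le_or_gt (2*k) (j+1) with hkm | hkm
    · rw [if_pos hkm, andrews_gaussBinom_eq _ _ hkm, andrewsQB.expo_even k (j+1) hkm]
    · rw [if_neg (by omega), andrewsQB.eq_zero_of_lt _ hkm, mul_zero]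
  rw [sum_congr rfl hu,
    ← andrewsQB.even_sum
      (fun r => (PowerSeries.X : RZ)^(r.choose 2 + r + (j+1)*((j+1)-r))
        * andrewsQB (PowerSeries.X : RZ) (j+1) r) (e+1)]
  have hshrink :
      (∑ r ∈ range (2*(e+1)), (1+(-1:RZ)^r)
          * ((PowerSeries.X : RZ)^(r.choose 2 + r + (j+1)*((j+1)-r))
            * andrewsQB (PowerSeries.X : RZ) (j+1) r))
        = ∑ r ∈ range (j+1+1), (1+(-1:RZ)^r)
            * ((PowerSeries.X : RZ)^(r.choose 2 + r + (j+1)*((j+1)-r))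
              * andrewsQB (PowerSeries.X : RZ) (j+1) r) := by
    refine (sum_subset ?_ ?_).symm
    · intro r hr
      simp only [mem_range] at hr ⊢
      omega
    · intro r _ hr
      simp only [mem_range] at hr
      rw [andrewsQB.eq_zero_of_lt _ (show j+1 < r by omega), mul_zero, mul_zero]
  rw [hshrink]
  have hA := andrewsQB.qbinom_theorem (PowerSeries.X : RZ) (j+1)
    PowerSeries.X (PowerSeries.X^(j+1))
  have hB := andrewsQB.qbinom_theorem (PowerSeries.X : RZ) (j+1)
    (-PowerSeries.X) (PowerSeries.X^(j+1))
  have hsplit : ∀ r ∈ range (j+1+1),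
      (1+(-1:RZ)^r) * ((PowerSeries.X : RZ)^(r.choose 2 + r + (j+1)*((j+1)-r))
          * andrewsQB (PowerSeries.X : RZ) (j+1) r)
        = ((PowerSeries.X : RZ)^(r.choose 2) * andrewsQB (PowerSeries.X : RZ) (j+1) r
            * PowerSeries.X^r * ((PowerSeries.X : RZ)^(j+1))^((j+1)-r))
          + ((PowerSeries.X : RZ)^(r.choose 2) * andrewsQB (PowerSeries.X : RZ) (j+1) r
            * (-PowerSeries.X)^r * ((PowerSeries.X : RZ)^(j+1))^((j+1)-r)) := by
    intro r _
    rw [neg_pow, ← pow_mul, pow_add, pow_add]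
    ring
  rw [sum_congr rfl hsplit, sum_add_distrib, ← hA, ← hB]
  have hBzero : (∏ i ∈ range (j+1),
      ((PowerSeries.X : RZ)^(j+1) + (-PowerSeries.X) * PowerSeries.X^i)) = 0 := by
    apply prod_eq_zero (mem_range.mpr (show j < j+1 by omega))
    rw [pow_succ']
    ring
  rw [hBzero, add_zero]
  have hfac : ∀ i ∈ range (j+1),
      (PowerSeries.X : RZ)^(j+1) + PowerSeries.X * PowerSeries.X^i
        = PowerSeries.X^(i+1) * (1 + (PowerSeries.X : RZ)^(j-i)) := by
    intro i hi
    have him : i < j+1 := mem_range.mp hi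
    rw [mul_add, mul_one, ← pow_add, show i+1+(j-i) = j+1 by omega, ← pow_succ', add_comm]
  rw [prod_congr rfl hfac, prod_mul_distrib, prod_pow_eq_pow_sum,
    andrewsQB.sum_range_add_one (j+1)]
  have hrefl : (∏ i ∈ range (j+1), (1 + (PowerSeries.X : RZ)^(j-i)))
      = ∏ i ∈ range (j+1), (1 + (PowerSeries.X : RZ)^i) := by
    rw [← prod_range_reflect (fun i => 1 + (PowerSeries.X : RZ)^i) (j+1)]
    refine prod_congr rfl fun i hi => ?_
    rw [show j+1-1-i = j-i by omega]
  rw [hrefl, prod_range_succ' (fun i => 1 + (PowerSeries.X : RZ)^i) j, pow_zero]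
  rw [show (∏ i ∈ range j, (1 + (PowerSeries.X : RZ)^(i+1)))
      = andrewsNP (PowerSeries.X : RZ) j from rfl]
  ring

end AndrewsPS

open PowerSeries in
/-- Andrews' identity with parameter `a` (Theorem, eq. (1.6)):
`∑_{m,k≥0} (-a)^m q^{(m-k)^2+k^2+k}/(aq^2;q^2)_m · [m choose 2k]_q
  = ∑_{n≥0} (-a)^n q^{n^2}` in `ℤ[[a,q]]`, where `[m choose 2k]_q = 0` if `2k > m`.
Stated coefficientwise in `a`: the `(m,k)` summand has `a`-order at least `m`,
so the coefficient of `a^e` involves only `m ≤ e`. -/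
theorem andrews_q10_param :
    ∀ e : ℕ,
      PowerSeries.coeff (R := PowerSeries ℤ) e
        (∑ m ∈ Finset.range (e + 1), ∑ k ∈ Finset.range (e + 1),
          if 2 * k ≤ m then
            (-(PowerSeries.X : Aq)) ^ m *
              PowerSeries.C (R := PowerSeries ℤ)
                (PowerSeries.X ^ ((m - k) ^ 2 + k ^ 2 + k) * gaussBinom m (2 * k)) *
              Ring.inverse (pochA m)
          else 0)
      =
      PowerSeries.coeff (R := PowerSeries ℤ) e
        (∑ n ∈ Finset.range (e + 1),
          (-(PowerSeries.X : Aq)) ^ n * PowerSeries.C (R := PowerSeries ℤ) (PowerSeries.X ^ (n ^ 2))) := by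
  intro e
  rw [andrews_rhs_eval, map_sum]
  have hterm : ∀ m ∈ range (e+1),
      PowerSeries.coeff (R := PowerSeries ℤ) e (∑ k ∈ Finset.range (e + 1),
          if 2 * k ≤ m then
            (-(PowerSeries.X : Aq)) ^ m *
              PowerSeries.C (R := PowerSeries ℤ)
                (PowerSeries.X ^ ((m - k) ^ 2 + k ^ 2 + k) * gaussBinom m (2 * k)) *
              Ring.inverse (pochA m)
          else 0)
        = (-1 : PowerSeries ℤ)^m * ((∑ k ∈ range (e+1), if 2*k ≤ m then
            (PowerSeries.X : PowerSeries ℤ)^((m-k)^2+k^2+k) * gaussBinom m (2*k) else 0)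
          * PowerSeries.coeff (R := PowerSeries ℤ) (e-m) (Ring.inverse (pochA m))) := by
    intro m hm
    have hme : m ≤ e := by simp only [mem_range] at hm; omega
    have h1 : ∀ k : ℕ, (if 2 * k ≤ m then
          (-(PowerSeries.X : Aq)) ^ m *
            PowerSeries.C (R := PowerSeries ℤ)
              (PowerSeries.X ^ ((m - k) ^ 2 + k ^ 2 + k) * gaussBinom m (2 * k)) *
            Ring.inverse (pochA m)
          else 0)
        = (-(PowerSeries.X : Aq)) ^ m *
            PowerSeries.C (R := PowerSeries ℤ)
              (if 2 * k ≤ m then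
                PowerSeries.X ^ ((m - k) ^ 2 + k ^ 2 + k) * gaussBinom m (2 * k) else 0) *
            Ring.inverse (pochA m) := by
      intro k
      split
      · rfl
      · rw [map_zero, mul_zero, zero_mul]
    rw [sum_congr rfl fun k _ => h1 k]
    have h2 : (∑ k ∈ range (e+1), (-(PowerSeries.X : Aq)) ^ m *
          PowerSeries.C (R := PowerSeries ℤ)
            (if 2 * k ≤ m then
              PowerSeries.X ^ ((m - k) ^ 2 + k ^ 2 + k) * gaussBinom m (2 * k) else 0) *
          Ring.inverse (pochA m))
        = (-(PowerSeries.X : Aq)) ^ m *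
            PowerSeries.C (R := PowerSeries ℤ)
              (∑ k ∈ range (e+1), if 2 * k ≤ m then
                PowerSeries.X ^ ((m - k) ^ 2 + k ^ 2 + k) * gaussBinom m (2 * k) else 0) *
            Ring.inverse (pochA m) := by
      calc (∑ k ∈ range (e+1), (-(PowerSeries.X : Aq)) ^ m *
            PowerSeries.C (R := PowerSeries ℤ)
              (if 2 * k ≤ m then
                PowerSeries.X ^ ((m - k) ^ 2 + k ^ 2 + k) * gaussBinom m (2 * k) else 0) *
            Ring.inverse (pochA m))
          = (∑ k ∈ range (e+1),
              PowerSeries.C (R := PowerSeries ℤ)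
                (if 2 * k ≤ m then
                  PowerSeries.X ^ ((m - k) ^ 2 + k ^ 2 + k) * gaussBinom m (2 * k) else 0))
              * ((-(PowerSeries.X : Aq)) ^ m * Ring.inverse (pochA m)) := by
            rw [sum_mul]
            exact sum_congr rfl fun k _ => by ring
        _ = PowerSeries.C (R := PowerSeries ℤ)
              (∑ k ∈ range (e+1), if 2 * k ≤ m then
                PowerSeries.X ^ ((m - k) ^ 2 + k ^ 2 + k) * gaussBinom m (2 * k) else 0)
              * ((-(PowerSeries.X : Aq)) ^ m * Ring.inverse (pochA m)) := by
            rw [map_sum]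
        _ = (-(PowerSeries.X : Aq)) ^ m *
              PowerSeries.C (R := PowerSeries ℤ)
                (∑ k ∈ range (e+1), if 2 * k ≤ m then
                  PowerSeries.X ^ ((m - k) ^ 2 + k ^ 2 + k) * gaussBinom m (2 * k) else 0) *
              Ring.inverse (pochA m) := by ring
    rw [h2]
    have h3 := andrews_coeff_term
      (∑ k ∈ range (e+1), if 2*k ≤ m then
        (PowerSeries.X : PowerSeries ℤ)^((m-k)^2+k^2+k) * gaussBinom m (2*k) else 0)
      (Ring.inverse (pochA m)) m (e-m)
    rw [show e-m+m = e by omega] at h3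
    exact h3
  rw [sum_congr rfl hterm]
  cases e with
  | zero =>
    rw [sum_range_one, sum_range_one, andrews_pochA_zero, Ring.inverse_one]
    rw [if_pos (by omega : 2*0 ≤ 0), andrews_gaussBinom_eq 0 0 (le_refl 0),
      andrewsQB.zero_right]
    simp
  | succ n =>
    rw [sum_range_succ']
    rw [andrews_pochA_zero, Ring.inverse_one,
      show n+1-0 = n+1 by omega,
      show PowerSeries.coeff (R := PowerSeries ℤ) (n+1) (1 : Aq) = 0 from by
        rw [PowerSeries.coeff_one]; simp]
    rw [mul_zero, mul_zero, add_zero]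
    have htj : ∀ j ∈ range (n+1),
        (-1 : PowerSeries ℤ)^(j+1) * ((∑ k ∈ range (n+1+1), if 2*k ≤ j+1 then
            (PowerSeries.X : PowerSeries ℤ)^((j+1-k)^2+k^2+k) * gaussBinom (j+1) (2*k) else 0)
          * PowerSeries.coeff (R := PowerSeries ℤ) (n+1-(j+1)) (Ring.inverse (pochA (j+1))))
        = -((PowerSeries.X : PowerSeries ℤ)^(2*n+1)) * andrewsF (PowerSeries.X : PowerSeries ℤ) n j := by
      intro j hj
      have hjn : j ≤ n := by simp only [mem_range] at hj; omega
      rw [andrews_fsum j (n+1) (by omega), andrews_ringInverse_pochA j,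
        show n+1-(j+1) = n-j by omega]
      rw [show andrewsHS j = PowerSeries.mk (fun t =>
          (PowerSeries.X : PowerSeries ℤ)^(2*t)
            * andrewsQB ((PowerSeries.X : PowerSeries ℤ)^2) (j+t) t) from rfl,
        PowerSeries.coeff_mk]
      rw [show j + (n-j) = n by omega]
      have hsym := andrewsQB.symm_add ((PowerSeries.X : PowerSeries ℤ)^2) j (n-j)
      rw [show j+(n-j) = n by omega] at hsym
      rw [hsym, andrewsF]
      have hexp : (j+2).choose 2 + 2*(n-j) = j.choose 2 + (2*n+1) := by
        have e1 := andrewsQB.choose_succ_two j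
        have e2 := andrewsQB.choose_succ_two (j+1)
        rw [show j+1+1 = j+2 by omega] at e2
        omega
      have hxx : (PowerSeries.X : PowerSeries ℤ)^((j+2).choose 2)
            * (PowerSeries.X : PowerSeries ℤ)^(2*(n-j))
          = (PowerSeries.X : PowerSeries ℤ)^(j.choose 2)
            * (PowerSeries.X : PowerSeries ℤ)^(2*n+1) := by
        rw [← pow_add, ← pow_add, hexp]
      linear_combination ((-1 : PowerSeries ℤ)^(j+1)
        * andrewsNP (PowerSeries.X : PowerSeries ℤ) j
        * andrewsQB ((PowerSeries.X : PowerSeries ℤ)^2) n j) * hxx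
    rw [sum_congr rfl htj, ← mul_sum,
      show (∑ j ∈ range (n+1), andrewsF (PowerSeries.X : PowerSeries ℤ) n j)
        = andrewsG (PowerSeries.X : PowerSeries ℤ) n from rfl,
      andrewsG_eq]
    rw [show (n+1)^2 = n^2 + (2*n+1) by ring, pow_add]
    ring
end

section
/- For all n ≥ 1: ∑_{m,k≥0, 1≤2k-1≤m≤n} (-1)^m q^{(m-k)^2+k^2+m-k} · [m choose 2k-1]_q · e_{m,n-m}(q) = (-1)^n q^{n^2}, where e_{m,j}(q) is the generating function for partitions into exactly j parts, all even and at most 2m (with e_{m,0}=1 and e_{0,j}=0 for j>0). -/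
open PowerSeries Finset

/-- Generating function `e_{m,j}` for partitions with exactly `j` parts, all parts even
and at most `2m` (so `e_{m,0} = 1` and `e_{0,j} = 0` for `j > 0`). -/
noncomputable def evenGF (m j : ℕ) : PowerSeries ℤ :=
  PowerSeries.mk fun s =>
    (Nat.card {p : Nat.Partition s //
      p.parts.card = j ∧ ∀ x ∈ p.parts, Even x ∧ x ≤ 2 * m} : ℤ)

lemma qPoch_zero : qPoch X 0 = 1 := by simp [qPoch]

lemma qPoch_succ (n : ℕ) : qPoch X (n + 1) = qPoch X n * (1 - X ^ (n + 1)) := by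
  rw [qPoch, Finset.prod_range_succ, ← pow_succ']; rfl

lemma qPoch_isUnit (n : ℕ) : IsUnit (qPoch (X : PowerSeries ℤ) n) := by
  rw [PowerSeries.isUnit_iff_constantCoeff, qPoch, map_prod]
  simp

lemma qPoch_ne_zero (n : ℕ) : qPoch (X : PowerSeries ℤ) n ≠ 0 :=
  (qPoch_isUnit n).ne_zero

lemma gb_mul {m r : ℕ} (h : r ≤ m) :
    gaussBinom m r * (qPoch X r * qPoch X (m - r)) = qPoch X m := by
  rw [gaussBinom, if_pos h, mul_assoc,
    Ring.inverse_mul_cancel _ ((qPoch_isUnit r).mul (qPoch_isUnit (m - r))), mul_one]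

lemma gb_eq_zero {m r : ℕ} (h : m < r) : gaussBinom m r = 0 := by
  rw [gaussBinom, if_neg (by omega)]

lemma gb_zero_right (m : ℕ) : gaussBinom m 0 = 1 := by
  have := gb_mul (Nat.zero_le m)
  rw [qPoch_zero, one_mul, Nat.sub_zero] at this
  exact mul_right_cancel₀ (qPoch_ne_zero m) (by rw [this, one_mul])

lemma gb_self (m : ℕ) : gaussBinom m m = 1 := by
  have := gb_mul (le_refl m)
  rw [Nat.sub_self, qPoch_zero, mul_one] at this
  exact mul_right_cancel₀ (qPoch_ne_zero m) (by rw [this, one_mul])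

lemma gb_pascal (m r : ℕ) :
    gaussBinom (m + 1) (r + 1) = gaussBinom m r + X ^ (r + 1) * gaussBinom m (r + 1) := by
  rcases lt_or_ge m r with hlt | hle
  · rw [gb_eq_zero (by omega), gb_eq_zero hlt, gb_eq_zero (by omega)]; ring
  rcases eq_or_lt_of_le hle with rfl | hlt
  · rw [gb_self, gb_self, gb_eq_zero (by omega)]; ring
  -- now r < m
  apply mul_right_cancel₀ (mul_ne_zero (qPoch_ne_zero (r+1)) (qPoch_ne_zero (m - r)))
  have e1 : m + 1 - (r + 1) = m - r := by omega
  rw [show (gaussBinom m r + X ^ (r + 1) * gaussBinom m (r + 1)) *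
      (qPoch X (r+1) * qPoch X (m - r)) =
      gaussBinom m r * (qPoch X r * qPoch X (m - r)) * (1 - X ^ (r+1))
      + X ^ (r+1) * (gaussBinom m (r+1) * (qPoch X (r+1) * qPoch X (m - (r+1))) *
        (1 - X ^ (m - r))) by
      rw [qPoch_succ r, show m - (r+1) = (m - r) - 1 by omega,
        show m - r = (m - r - 1) + 1 by omega, qPoch_succ (m - r - 1)]
      rw [show m - r - 1 + 1 = m - r by omega]
      ring]
  rw [gb_mul (le_of_lt hlt), gb_mul (by omega : r + 1 ≤ m), ← e1, gb_mul (by omega)]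
  rw [e1, qPoch_succ m]
  have : (X : PowerSeries ℤ) ^ (m + 1) = X ^ (r + 1) * X ^ (m - r) := by
    rw [← pow_add]; congr 1; omega
  rw [this]; ring

lemma evenGF_zero_right (m : ℕ) : evenGF m 0 = 1 := by
  ext s
  rw [evenGF, coeff_mk, PowerSeries.coeff_one]
  rcases Nat.eq_zero_or_pos s with rfl | hs
  · rw [if_pos rfl]
    norm_cast
    rw [Nat.card_eq_one_iff_unique]
    constructor
    · constructor
      intro a b
      apply Subtype.ext; apply Subsingleton.elim
    · exact ⟨⟨default, by
        have : (default : Nat.Partition 0).parts = 0 := by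
          have h := (default : Nat.Partition 0).parts_sum
          by_contra hne
          obtain ⟨a, ha⟩ := Multiset.exists_mem_of_ne_zero hne
          have := (default : Nat.Partition 0).parts_pos ha
          have := Multiset.single_le_sum (fun x _ => Nat.zero_le x) a ha
          omega
        simp [this]⟩⟩
  · rw [if_neg (by omega)]
    norm_cast
    rw [Nat.card_eq_zero]
    left
    constructor
    rintro ⟨p, hc, _⟩
    have h0 : p.parts = 0 := Multiset.card_eq_zero.mp hc
    have h2 := p.parts_sum
    rw [h0] at h2
    simp at h2; omega

lemma evenGF_zero_left {j : ℕ} (hj : 1 ≤ j) : evenGF 0 j = 0 := by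
  ext s
  rw [evenGF, coeff_mk, (coeff s).map_zero]
  norm_cast
  rw [Nat.card_eq_zero]
  left
  constructor
  rintro ⟨p, hc, hb⟩
  have : p.parts = 0 := by
    rw [Multiset.eq_zero_iff_forall_notMem]
    intro a ha
    have h1 := p.parts_pos ha
    have h2 := (hb a ha).2
    omega
  rw [this] at hc
  simp at hc; omega

lemma evenGF_R2 (m j : ℕ) :
    evenGF (m + 1) (j + 1) =
      evenGF m (j + 1) + X ^ (2 * (m + 1)) * evenGF (m + 1) j := by
  ext s
  rw [_root_.map_add (coeff s), PowerSeries.coeff_X_pow_mul']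
  simp only [evenGF, coeff_mk]
  have key : Nat.card {p : Nat.Partition s //
        p.parts.card = j + 1 ∧ ∀ x ∈ p.parts, Even x ∧ x ≤ 2 * (m + 1)}
      = Nat.card {p : Nat.Partition s //
          p.parts.card = j + 1 ∧ ∀ x ∈ p.parts, Even x ∧ x ≤ 2 * m}
        + (if 2 * (m + 1) ≤ s then Nat.card {p : Nat.Partition (s - 2 * (m + 1)) //
            p.parts.card = j ∧ ∀ x ∈ p.parts, Even x ∧ x ≤ 2 * (m + 1)} else 0) := by
    classical
    set P : Nat.Partition s → Prop := fun p =>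
      p.parts.card = j + 1 ∧ ∀ x ∈ p.parts, Even x ∧ x ≤ 2 * (m + 1) with hP
    have hsplit : Nat.card {p : Nat.Partition s // P p}
        = Nat.card {p : Nat.Partition s // P p ∧ (2 * (m + 1)) ∈ p.parts}
          + Nat.card {p : Nat.Partition s // P p ∧ (2 * (m + 1)) ∉ p.parts} := by
      rw [← Nat.card_sum]
      apply Nat.card_congr
      exact ((Equiv.sumCompl (fun a : {p : Nat.Partition s // P p} =>
          (2 * (m + 1)) ∈ a.1.parts)).symm.trans
        (Equiv.sumCongr
          (Equiv.subtypeSubtypeEquivSubtypeInter P (fun p => (2 * (m + 1)) ∈ p.parts))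
          (Equiv.subtypeSubtypeEquivSubtypeInter P (fun p => (2 * (m + 1)) ∉ p.parts))))
    rw [hsplit, add_comm]
    congr 1
    · -- partitions avoiding 2(m+1) are exactly those bounded by 2m
      apply Nat.card_congr
      apply Equiv.subtypeEquivRight
      intro p
      constructor
      · rintro ⟨⟨hc, hb⟩, hnm⟩
        refine ⟨hc, fun x hx => ⟨(hb x hx).1, ?_⟩⟩
        have h1 := (hb x hx).1
        have h2 := (hb x hx).2
        obtain ⟨c, rfl⟩ := h1
        have : c + c ≠ 2 * (m + 1) := fun h => hnm (h ▸ hx)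
        omega
      · rintro ⟨hc, hb⟩
        refine ⟨⟨hc, fun x hx => ⟨(hb x hx).1, by have := (hb x hx).2; omega⟩⟩, ?_⟩
        intro hmem
        have := (hb _ hmem).2
        omega
    · -- partitions containing 2(m+1)
      split_ifs with h
      · apply Nat.card_congr
        refine ⟨fun a => ⟨⟨a.1.parts.erase (2 * (m + 1)), ?_, ?_⟩, ?_, ?_⟩,
          fun b => ⟨⟨(2 * (m + 1)) ::ₘ b.1.parts, ?_, ?_⟩, ⟨⟨?_, ?_⟩, ?_⟩⟩, ?_, ?_⟩
        · intro i hi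
          exact a.1.parts_pos (Multiset.mem_of_mem_erase hi)
        · have hc := Multiset.cons_erase a.2.2
          have h2 : (2 * (m + 1)) + (a.1.parts.erase (2 * (m + 1))).sum = s := by
            rw [← Multiset.sum_cons, hc, a.1.parts_sum]
          omega
        · rw [Multiset.card_erase_of_mem a.2.2, a.2.1.1]
          rfl
        · intro x hx
          exact a.2.1.2 x (Multiset.mem_of_mem_erase hx)
        · intro i hi
          rcases Multiset.mem_cons.mp hi with rfl | hi'
          · omega
          · exact b.1.parts_pos hi'
        · rw [Multiset.sum_cons, b.1.parts_sum]; omega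
        · rw [Multiset.card_cons, b.2.1]
        · intro x hx
          rcases Multiset.mem_cons.mp hx with rfl | hx'
          · exact ⟨⟨m + 1, by ring⟩, le_refl _⟩
          · exact b.2.2 x hx'
        · exact Multiset.mem_cons_self _ _
        · intro a
          apply Subtype.ext
          apply Nat.Partition.ext
          simp only
          exact Multiset.cons_erase a.2.2
        · intro b
          apply Subtype.ext
          apply Nat.Partition.ext
          simp only
          exact Multiset.erase_cons_head _ _
      · rw [Nat.card_eq_zero]
        left
        constructor
        rintro ⟨p, _, hmem⟩
        have := Multiset.single_le_sum (fun x _ => Nat.zero_le x) _ hmem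
        rw [p.parts_sum] at this
        omega
  rw [key]
  push_cast [apply_ite (fun t : ℕ => (t : ℤ))]
  rfl

lemma evenGF_one (j : ℕ) : evenGF 1 (j + 1) = X ^ 2 * evenGF 1 j := by
  have r := evenGF_R2 0 j
  rw [evenGF_zero_left (by omega)] at r
  simpa using r

lemma evenGF_col1 (m : ℕ) :
    evenGF (m + 1) 1 = X ^ 2 + X ^ 2 * evenGF m 1 := by
  induction m with
  | zero =>
    have r : evenGF 1 1 = evenGF 0 1 + X ^ 2 * evenGF 1 0 := by simpa using evenGF_R2 0 0
    linear_combination r + (1 - X ^ 2) * evenGF_zero_left (le_refl 1)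
      + X ^ 2 * evenGF_zero_right 1
  | succ m ih =>
    have h1 : evenGF (m + 2) 1 = evenGF (m + 1) 1 + X ^ (2 * (m + 2)) := by
      have := evenGF_R2 (m + 1) 0
      rw [evenGF_zero_right] at this
      simpa using this
    have h2 : evenGF (m + 1) 1 = evenGF m 1 + X ^ (2 * (m + 1)) := by
      have := evenGF_R2 m 0
      rw [evenGF_zero_right] at this
      simpa using this
    linear_combination h1 + ih - X ^ 2 * h2

lemma evenGF_R1 (m j : ℕ) :
    evenGF (m + 1) (j + 1) = X ^ 2 * evenGF (m + 1) j + X ^ (2 * (j + 1)) * evenGF m (j + 1) := by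
  induction m generalizing j with
  | zero =>
    rw [evenGF_one j, evenGF_zero_left (by omega)]
    ring
  | succ m ihm =>
    induction j with
    | zero =>
      rw [evenGF_zero_right]
      linear_combination evenGF_col1 (m + 1)
    | succ j ihj =>
      have rA := evenGF_R2 (m + 1) (j + 1)
      have hm := ihm (j + 1)
      have hR2a := evenGF_R2 (m + 1) j
      have hR2b := evenGF_R2 m (j + 1)
      linear_combination rA + hm + X ^ (2 * (m + 2)) * ihj - X ^ 2 * hR2a
        - X ^ (2 * (j + 2)) * hR2b

lemma evenGF_star (m j : ℕ) :
    (1 + X ^ m) * evenGF (m + 1) (j + 1) =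
      (1 + X ^ m) * X ^ (m + 2) * evenGF (m + 1) j
        + (1 + X ^ (m + 2 * j + 2)) * evenGF m (j + 1) := by
  have h1 := evenGF_R2 m j
  have h2 := evenGF_R1 m j
  linear_combination h1 + X ^ m * h2

def Tn : ℕ → ℕ
  | 0 => 0
  | m + 1 => Tn m + (m + 1)

noncomputable def Dprod (r : ℕ) : PowerSeries ℤ :=
  ∏ i ∈ Finset.range r, (1 + X ^ (i + 1))

lemma Dprod_succ (r : ℕ) : Dprod (r + 1) = Dprod r * (1 + X ^ (r + 1)) := by
  rw [Dprod, Finset.prod_range_succ]; rfl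

lemma Dprod_zero : Dprod 0 = 1 := by simp [Dprod]

def ea (m k : ℕ) : ℕ := (m - k) ^ 2 + k ^ 2 + (m - k)
def ec (m k : ℕ) : ℕ := (m - k) ^ 2 + (k + 1) ^ 2 + (m - k)

noncomputable def FF (m : ℕ) : PowerSeries ℤ :=
  ∑ k ∈ Finset.range (m + 1), X ^ (ea m (k + 1)) * gaussBinom m (2 * k + 1)

lemma FF_def (m : ℕ) :
    FF m = ∑ k ∈ Finset.range (m + 1), X ^ (ea m (k + 1)) * gaussBinom m (2 * k + 1) := rfl

noncomputable def GG (m : ℕ) : PowerSeries ℤ :=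
  ∑ k ∈ Finset.range (m + 1), X ^ (ec m k) * gaussBinom m (2 * k)

lemma FF_zero : FF 0 = 0 := by
  simp [FF, gb_eq_zero (show 0 < 1 by omega)]

lemma GG_zero : GG 0 = X := by
  simp [GG, ec, gb_zero_right]

-- exponent lemmas
lemma exp1 (k t : ℕ) : ea (k + t + 1) (k + 1) = ec (k + t) k := by
  rw [ea, ec, show k + t + 1 - (k + 1) = t by omega, show k + t - k = t by omega]

lemma exp2 (k t : ℕ) :
    ea (k + t + 1) (k + 1) + (2 * k + 1) = 2 * (k + t) + 1 + ea (k + t) (k + 1) := by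
  rcases t with _ | u
  · rw [ea, ea, show k + 0 + 1 - (k + 1) = 0 by omega, show k + 0 - (k + 1) = 0 by omega]
    ring
  · rw [ea, ea, show k + (u + 1) + 1 - (k + 1) = u + 1 by omega,
      show k + (u + 1) - (k + 1) = u by omega]
    ring

lemma exp3 (k t : ℕ) : ec (k + t + 1) (k + 1) = 2 * (k + t) + 3 + ea (k + t) (k + 1) := by
  rcases t with _ | u
  · rw [ec, ea, show k + 0 + 1 - (k + 1) = 0 by omega, show k + 0 - (k + 1) = 0 by omega]
    ring
  · rw [ec, ea, show k + (u + 1) + 1 - (k + 1) = u + 1 by omega,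
      show k + (u + 1) - (k + 1) = u by omega]
    ring

lemma exp4 (k u : ℕ) :
    ec (k + u + 2) (k + 1) + (2 * k + 2) = 2 * (k + u + 1) + 2 + ec (k + u + 1) (k + 1) := by
  rw [ec, ec, show k + u + 2 - (k + 1) = u + 1 by omega, show k + u + 1 - (k + 1) = u by omega]
  ring

lemma exp5 (m : ℕ) : ec (m + 1) 0 = 2 * m + 2 + ec m 0 := by
  rw [ec, ec]; simp; ring

lemma FF_succ (m : ℕ) : FF (m + 1) = GG m + X ^ (2 * m + 1) * FF m := by
  have expand : ∀ k, X ^ (ea (m + 1) (k + 1)) * gaussBinom (m + 1) (2 * k + 1) =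
      X ^ (ea (m + 1) (k + 1)) * gaussBinom m (2 * k)
        + X ^ (ea (m + 1) (k + 1) + (2 * k + 1)) * gaussBinom m (2 * k + 1) := by
    intro k
    have hp : gaussBinom (m + 1) (2 * k + 1)
        = gaussBinom m (2 * k) + X ^ (2 * k + 1) * gaussBinom m (2 * k + 1) := by
      simpa using gb_pascal m (2 * k)
    rw [hp, pow_add]; ring
  rw [FF, Finset.sum_congr rfl (fun k _ => expand k), Finset.sum_add_distrib]
  congr 1
  · rw [Finset.sum_range_succ, gb_eq_zero (show m < 2 * (m + 1) by omega), mul_zero, add_zero,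
      GG]
    apply Finset.sum_congr rfl
    intro k hk
    rcases Nat.le.dest (Nat.lt_succ_iff.mp (Finset.mem_range.mp hk)) with ⟨t, rfl⟩
    rw [exp1]
  · rw [Finset.sum_range_succ, gb_eq_zero (show m < 2 * (m + 1) + 1 by omega), mul_zero,
      add_zero, FF, Finset.mul_sum]
    apply Finset.sum_congr rfl
    intro k hk
    rcases Nat.le.dest (Nat.lt_succ_iff.mp (Finset.mem_range.mp hk)) with ⟨t, rfl⟩
    rw [exp2, pow_add, show 2 * (k + t) + 1 = 2 * (k + t) + 1 by rfl]
    ring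

lemma GG_succ (m : ℕ) : GG (m + 1) = X ^ (2 * m + 3) * FF m + X ^ (2 * m + 2) * GG m := by
  rw [GG, Finset.sum_range_succ']
  have expand : ∀ k, X ^ (ec (m + 1) (k + 1)) * gaussBinom (m + 1) (2 * (k + 1)) =
      X ^ (ec (m + 1) (k + 1)) * gaussBinom m (2 * k + 1)
        + X ^ (ec (m + 1) (k + 1) + (2 * k + 2)) * gaussBinom m (2 * k + 2) := by
    intro k
    have hp : gaussBinom (m + 1) (2 * (k + 1))
        = gaussBinom m (2 * k + 1) + X ^ (2 * k + 2) * gaussBinom m (2 * k + 2) := by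
      have := gb_pascal m (2 * k + 1)
      rw [show 2 * (k + 1) = 2 * k + 1 + 1 by ring]
      simpa using this
    rw [hp, pow_add]; ring
  rw [Finset.sum_congr rfl (fun k _ => expand k), Finset.sum_add_distrib]
  have piece1 : (∑ k ∈ Finset.range (m + 1),
      X ^ (ec (m + 1) (k + 1)) * gaussBinom m (2 * k + 1)) = X ^ (2 * m + 3) * FF m := by
    rw [FF, Finset.mul_sum]
    apply Finset.sum_congr rfl
    intro k hk
    rcases Nat.le.dest (Nat.lt_succ_iff.mp (Finset.mem_range.mp hk)) with ⟨t, rfl⟩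
    rw [exp3, pow_add, show 2 * (k + t) + 3 = 2 * (k + t) + 3 by rfl]
    ring
  have piece2 : (∑ k ∈ Finset.range (m + 1),
        X ^ (ec (m + 1) (k + 1) + (2 * k + 2)) * gaussBinom m (2 * k + 2))
        + X ^ (ec (m + 1) 0) * gaussBinom (m + 1) (2 * 0)
      = X ^ (2 * m + 2) * GG m := by
    rw [GG, Finset.mul_sum]
    conv_rhs => rw [Finset.sum_range_succ']
    rw [Finset.sum_range_succ, gb_eq_zero (show m < 2 * m + 2 by omega), mul_zero, mul_zero,
      add_zero]
    congr 1
    · apply Finset.sum_congr rfl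
      intro k hk
      obtain ⟨u, rfl⟩ := Nat.le.dest (Finset.mem_range.mp hk)
      rw [show k + 1 + u + 1 = k + u + 2 by ring, show k + 1 + u = k + u + 1 by ring,
        exp4, pow_add, show 2 * (k + 1) = 2 * k + 2 by ring]
      ring
    · rw [gb_zero_right, gb_zero_right, mul_one, mul_one, ← pow_add, exp5]
  rw [piece1, add_assoc, piece2]

lemma closed (m : ℕ) : FF (m + 1) = X ^ (Tn (m + 1)) * Dprod m ∧
    GG (m + 1) = X ^ (Tn (m + 1) + (m + 2)) * Dprod m := by
  induction m with
  | zero =>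
    constructor
    · rw [FF_succ, FF_zero, GG_zero, Dprod_zero, show Tn 1 = 1 by rfl]
      simp [pow_one]
    · rw [GG_succ, FF_zero, GG_zero, Dprod_zero, show Tn 1 = 1 by rfl]
      rw [mul_zero, zero_add, mul_one, ← pow_succ]
  | succ m ih =>
    obtain ⟨hF, hG⟩ := ih
    have hT : Tn (m + 2) = Tn (m + 1) + (m + 2) := rfl
    constructor
    · rw [FF_succ, hF, hG, Dprod_succ, hT]
      rw [show 2 * (m + 1) + 1 = m + 2 + (m + 1) by ring]
      rw [pow_add, pow_add]
      ring
    · rw [GG_succ, hF, hG, Dprod_succ, hT]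
      rw [show 2 * (m + 1) + 3 = (m + 2) + (m + 3) by ring,
        show 2 * (m + 1) + 2 = (m + 1) + (m + 3) by ring]
      rw [pow_add, pow_add, pow_add, pow_add]
      ring

lemma FF_closed (m : ℕ) : FF (m + 1) = X ^ (Tn (m + 1)) * Dprod m := (closed m).1

noncomputable def FD (m : ℕ) : PowerSeries ℤ := X ^ (Tn m) * Dprod (m - 1)

lemma FD_succ {r : ℕ} (h : 1 ≤ r) : FD (r + 1) = FD r * (X ^ (r + 1) * (1 + X ^ r)) := by
  rcases r with _ | s
  · omega
  · rw [FD, FD, show s + 1 + 1 - 1 = s + 1 by omega, show s + 1 - 1 = s by omega,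
      Dprod_succ, show Tn (s + 1 + 1) = Tn (s + 1) + (s + 2) by rfl, pow_add]
    ring

lemma FF_eq_FD {m : ℕ} (h : 1 ≤ m) : FF m = FD m := by
  rcases m with _ | s
  · omega
  · rw [FF_closed, FD, show s + 1 - 1 = s by omega]

lemma FD_one : FD 1 = X := by
  rw [FD, show Tn 1 = 1 by rfl, show (1:ℕ) - 1 = 0 by rfl, Dprod_zero, pow_one, mul_one]

lemma key_telescope (n : ℕ) : ∀ r : ℕ, 1 ≤ r → r ≤ n →
    (∑ m ∈ Finset.Icc 1 r, (-1 : PowerSeries ℤ) ^ m * FD m *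
        (evenGF m (n + 1 - m) + X ^ (2 * n + 1) * evenGF m (n - m)))
      = (-1) ^ r * FD r * ((X ^ (r + 1) + X ^ (2 * n + 1)) * evenGF r (n - r)) := by
  intro r hr
  induction r, hr using Nat.le_induction with
  | base =>
    intro h1
    obtain ⟨t, rfl⟩ : ∃ t, n = t + 1 := ⟨n - 1, by omega⟩
    rw [Finset.Icc_self, Finset.sum_singleton,
      show t + 1 + 1 - 1 = t + 1 by omega, show t + 1 - 1 = t by omega]
    linear_combination ((-1 : PowerSeries ℤ) ^ 1 * FD 1) * evenGF_one t
  | succ r hr ih =>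
    intro hrn
    rw [Finset.sum_Icc_succ_top (by omega : 1 ≤ r + 1), ih (by omega)]
    obtain ⟨j, rfl⟩ : ∃ j, n = r + 1 + j := ⟨n - (r + 1), by omega⟩
    rw [show r + 1 + j + 1 - (r + 1) = j + 1 by omega,
      show r + 1 + j - (r + 1) = j by omega,
      show r + 1 + j - r = j + 1 by omega]
    linear_combination ((-1 : PowerSeries ℤ) ^ (r + 1) *
        (evenGF (r + 1) (j + 1) - X ^ (r + 2) * evenGF (r + 1) j)) * (FD_succ hr)
      + ((-1 : PowerSeries ℤ) ^ (r + 1) * FD r * X ^ (r + 1)) * (evenGF_star r j)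

lemma main_sum : ∀ n : ℕ, 1 ≤ n →
    (∑ m ∈ Finset.Icc 1 n, (-1 : PowerSeries ℤ) ^ m * FD m * evenGF m (n - m))
      = (-1) ^ n * X ^ (n ^ 2) := by
  intro n hn
  induction n, hn using Nat.le_induction with
  | base =>
    rw [Finset.Icc_self, Finset.sum_singleton, show (1:ℕ) - 1 = 0 by rfl,
      evenGF_zero_right, FD_one]
    norm_num
  | succ n hn ih =>
    rw [Finset.sum_Icc_succ_top (by omega : 1 ≤ n + 1)]
    have split : ∀ m ∈ Finset.Icc 1 n,
        (-1 : PowerSeries ℤ) ^ m * FD m * evenGF m (n + 1 - m)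
          = ((-1) ^ m * FD m * (evenGF m (n + 1 - m) + X ^ (2 * n + 1) * evenGF m (n - m)))
            - X ^ (2 * n + 1) * ((-1) ^ m * FD m * evenGF m (n - m)) := by
      intro m _; ring
    rw [Finset.sum_congr rfl split, Finset.sum_sub_distrib, ← Finset.mul_sum,
      key_telescope n n hn (le_refl n), ih,
      show n + 1 - (n + 1) = 0 by omega, show n - n = 0 by omega,
      evenGF_zero_right, evenGF_zero_right]
    linear_combination (-(-1 : PowerSeries ℤ) ^ n) * FD_succ hn

lemma inner_eq {n m : ℕ} (h1 : 1 ≤ m) (h2 : m ≤ n) :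
    (∑ k ∈ Finset.range (n + 1),
      if 1 ≤ k ∧ 2 * k - 1 ≤ m then
        (-1 : PowerSeries ℤ) ^ m * PowerSeries.X ^ ((m - k) ^ 2 + k ^ 2 + (m - k)) *
          gaussBinom m (2 * k - 1) * evenGF m (n - m)
      else 0)
    = (-1) ^ m * FD m * evenGF m (n - m) := by
  rw [Finset.sum_range_succ']
  rw [if_neg (by omega)]
  have hterm : ∀ k,
      (if 1 ≤ k + 1 ∧ 2 * (k + 1) - 1 ≤ m then
        (-1 : PowerSeries ℤ) ^ m * PowerSeries.X ^ ((m - (k+1)) ^ 2 + (k+1) ^ 2 + (m - (k+1))) *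
          gaussBinom m (2 * (k + 1) - 1) * evenGF m (n - m)
      else 0)
      = (-1) ^ m * (X ^ (ea m (k + 1)) * gaussBinom m (2 * k + 1)) * evenGF m (n - m) := by
    intro k
    rw [show 2 * (k + 1) - 1 = 2 * k + 1 by omega]
    by_cases hc : 2 * k + 1 ≤ m
    · rw [if_pos ⟨by omega, hc⟩, ea]; ring
    · rw [if_neg (by omega), gb_eq_zero (by omega)]; ring
  rw [Finset.sum_congr rfl (fun k _ => hterm k), add_zero]
  have pull : (∑ k ∈ Finset.range n,
      (-1 : PowerSeries ℤ) ^ m * (X ^ (ea m (k + 1)) * gaussBinom m (2 * k + 1)) * evenGF m (n - m))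
      = (-1) ^ m * (∑ k ∈ Finset.range n, X ^ (ea m (k + 1)) * gaussBinom m (2 * k + 1))
          * evenGF m (n - m) := by
    rw [Finset.mul_sum, Finset.sum_mul]
  rw [pull]
  have hsum : (∑ k ∈ Finset.range n, X ^ (ea m (k + 1)) * gaussBinom m (2 * k + 1)) = FF m := by
    rw [FF_def]
    have e1 : (∑ k ∈ Finset.range n, X ^ (ea m (k + 1)) * gaussBinom m (2 * k + 1))
        = ∑ k ∈ Finset.range (n + m + 1), X ^ (ea m (k + 1)) * gaussBinom m (2 * k + 1) :=
      Finset.sum_subset (Finset.range_subset_range.mpr (by omega : n ≤ n + m + 1))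
        (fun k _ hk => by
          rw [gb_eq_zero (show m < 2 * k + 1 by
            have := Finset.mem_range.not.mp hk; omega), mul_zero])
    have e2 : (∑ k ∈ Finset.range (m + 1), X ^ (ea m (k + 1)) * gaussBinom m (2 * k + 1))
        = ∑ k ∈ Finset.range (n + m + 1), X ^ (ea m (k + 1)) * gaussBinom m (2 * k + 1) :=
      Finset.sum_subset (Finset.range_subset_range.mpr (by omega : m + 1 ≤ n + m + 1))
        (fun k _ hk => by
          rw [gb_eq_zero (show m < 2 * k + 1 by
            have := Finset.mem_range.not.mp hk; omega), mul_zero])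
    rw [e1, e2]
  rw [hsum, FF_eq_FD h1]

lemma inner_zero (n : ℕ) :
    (∑ k ∈ Finset.range (n + 1),
      if 1 ≤ k ∧ 2 * k - 1 ≤ 0 then
        (-1 : PowerSeries ℤ) ^ 0 * PowerSeries.X ^ ((0 - k) ^ 2 + k ^ 2 + (0 - k)) *
          gaussBinom 0 (2 * k - 1) * evenGF 0 (n - 0)
      else 0) = 0 := by
  apply Finset.sum_eq_zero
  intro k _
  rw [if_neg (by omega)]


/-- The coefficient of `a^n` (`n ≥ 1`) in Andrews' identity:
`∑_{1 ≤ 2k-1 ≤ m ≤ n} (-1)^m q^{(m-k)^2+k^2+m-k} [m choose 2k-1]_q e_{m,n-m}(q)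
  = (-1)^n q^{n^2}` in `ℤ[[q]]`. -/
theorem coeff_identity_q9 :
    ∀ n : ℕ, 1 ≤ n →
      (∑ m ∈ Finset.range (n + 1), ∑ k ∈ Finset.range (n + 1),
        if 1 ≤ k ∧ 2 * k - 1 ≤ m then
          (-1 : PowerSeries ℤ) ^ m * PowerSeries.X ^ ((m - k) ^ 2 + k ^ 2 + (m - k)) *
            gaussBinom m (2 * k - 1) * evenGF m (n - m)
        else 0) =
      (-1 : PowerSeries ℤ) ^ n * PowerSeries.X ^ (n ^ 2) := by
  intro n hn
  have step : ∀ m ∈ Finset.range (n + 1),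
      (∑ k ∈ Finset.range (n + 1),
        if 1 ≤ k ∧ 2 * k - 1 ≤ m then
          (-1 : PowerSeries ℤ) ^ m * PowerSeries.X ^ ((m - k) ^ 2 + k ^ 2 + (m - k)) *
            gaussBinom m (2 * k - 1) * evenGF m (n - m)
        else 0)
      = if 1 ≤ m then (-1 : PowerSeries ℤ) ^ m * FD m * evenGF m (n - m) else 0 := by
    intro m hm
    rcases Nat.eq_zero_or_pos m with rfl | hm1
    · rw [if_neg (by omega)]
      exact inner_zero n
    · have hm1' : 1 ≤ m := hm1
      rw [if_pos hm1']
      exact inner_eq hm1 (by have := Finset.mem_range.mp hm; omega)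
  rw [Finset.sum_congr rfl step, ← Finset.sum_filter]
  have hfil : Finset.filter (fun m => 1 ≤ m) (Finset.range (n + 1)) = Finset.Icc 1 n := by
    ext m; simp; omega
  rw [hfil, main_sum n hn]
end
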